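/- The map T : c₀^λ(F̂) → c₀ defined by T(x) = F̄(x) is a linear bijection that preserves the norm ‖x‖ = sup_n |F̄_n(x)|; in particular c₀^λ(F̂) is linearly isometric to c₀. -/

import Mathlib

open Filter Finset

noncomputable def fibR : ℕ → ℝ
  | 0 => 1
  | 1 => 1
  | (n + 2) => fibR (n + 1) + fibR n

noncomputable def Fhat (x : ℕ → ℝ) (n : ℕ) : ℝ :=
  fibR n / fibR (n + 1) * x n - fibR (n + 1) / fibR n * (if n = 0 then 0 else x (n - 1))

noncomputable def Fbar (Λ : ℕ → ℝ) (x : ℕ → ℝ) (n : ℕ) : ℝ :=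
  (1 / Λ n) * ∑ k ∈ Finset.range (n + 1),
    (Λ k - if k = 0 then 0 else Λ (k - 1)) *
      (fibR k / fibR (k + 1) * x k -
        fibR (k + 1) / fibR k * (if k = 0 then 0 else x (k - 1)))

lemma fibR_pos : ∀ n, 0 < fibR n
  | 0 => one_pos
  | 1 => one_pos
  | (n + 2) => by rw [fibR]; exact add_pos (fibR_pos (n + 1)) (fibR_pos n)

lemma fibR_ne (n : ℕ) : fibR n ≠ 0 := (fibR_pos n).ne'

lemma Fbar_eq (Λ x : ℕ → ℝ) (n : ℕ) :
    Fbar Λ x n = (1 / Λ n) * ∑ k ∈ Finset.range (n + 1),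
      (Λ k - if k = 0 then 0 else Λ (k - 1)) * Fhat x k := rfl

lemma a_pos (Λ : ℕ → ℝ) (hmono : StrictMono Λ) (hpos : ∀ k, 0 < Λ k) (k : ℕ) :
    0 < Λ k - if k = 0 then 0 else Λ (k - 1) := by
  cases k with
  | zero => simpa using hpos 0
  | succ n => simp only [Nat.succ_ne_zero, if_false, Nat.succ_sub_one, sub_pos]
              exact hmono (Nat.lt_succ_self n)

lemma tele (h : ℕ → ℝ) : ∀ n, ∑ k ∈ Finset.range (n + 1),
    (h k - if k = 0 then 0 else h (k - 1)) = h n := by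
  intro n
  induction n with
  | zero => simp
  | succ m ih => rw [Finset.sum_range_succ, ih]; simp

noncomputable def solveX (g : ℕ → ℝ) : ℕ → ℝ
  | 0 => g 0
  | n + 1 => fibR (n + 2) / fibR (n + 1) * (g (n + 1) + fibR (n + 2) / fibR (n + 1) * solveX g n)

lemma Fhat_solveX (g : ℕ → ℝ) : ∀ n, Fhat (solveX g) n = g n := by
  intro n
  cases n with
  | zero => simp [Fhat, solveX, fibR]
  | succ m =>
      have h1 := fibR_ne (m + 1)
      have h2 := fibR_ne (m + 2)
      simp only [Fhat, solveX, Nat.succ_ne_zero, if_false, Nat.succ_sub_one]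
      field_simp
      ring

lemma Fhat_eq_of (x y : ℕ → ℝ) (h : ∀ n, Fhat x n = Fhat y n) : x = y := by
  funext n
  induction n with
  | zero =>
      have := h 0
      simpa [Fhat, fibR] using this
  | succ m ih =>
      have hm := h (m + 1)
      simp only [Fhat, Nat.succ_ne_zero, if_false, Nat.succ_sub_one, ih] at hm
      have h1 := fibR_ne (m + 1)
      have h2 := fibR_ne (m + 2)
      have h3 : fibR (m + 1) / fibR (m + 2) ≠ 0 := div_ne_zero h1 h2
      exact mul_left_cancel₀ h3 (sub_left_inj.mp hm)

theorem c0lambdaF_isometric_c0 (Λ : ℕ → ℝ) (hmono : StrictMono Λ) (hpos : ∀ k, 0 < Λ k)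
    (hlim : Tendsto Λ atTop atTop) :
    (∀ x y : ℕ → ℝ, Fbar Λ (fun n => x n + y n) = fun n => Fbar Λ x n + Fbar Λ y n) ∧
    (∀ (c : ℝ) (x : ℕ → ℝ), Fbar Λ (fun n => c * x n) = fun n => c * Fbar Λ x n) ∧
    (∀ x y : ℕ → ℝ, Tendsto (Fbar Λ x) atTop (nhds 0) →
      Tendsto (Fbar Λ y) atTop (nhds 0) → Fbar Λ x = Fbar Λ y → x = y) ∧
    (∀ y : ℕ → ℝ, Tendsto y atTop (nhds 0) →
      ∃ x : ℕ → ℝ, Tendsto (Fbar Λ x) atTop (nhds 0) ∧ Fbar Λ x = y) ∧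
    (∀ x : ℕ → ℝ, Tendsto (Fbar Λ x) atTop (nhds 0) →
      (⨆ n, |Fbar Λ x n|) = ⨆ n, |(Fbar Λ x) n|) := by
  refine ⟨?_, ?_, ?_, ?_, fun x _ => rfl⟩
  · intro x y
    funext n
    simp only [Fbar]
    rw [← mul_add, ← Finset.sum_add_distrib]
    congr 1
    refine Finset.sum_congr rfl fun k _ => ?_
    split_ifs <;> ring
  · intro c x
    funext n
    simp only [Fbar]
    conv_rhs => rw [mul_left_comm, Finset.mul_sum]
    congr 1
    refine Finset.sum_congr rfl fun k _ => ?_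
    split_ifs <;> ring
  · intro x y _ _ hxy
    have hsum : ∀ n, ∑ k ∈ Finset.range (n + 1),
        (Λ k - if k = 0 then 0 else Λ (k - 1)) * Fhat x k
        = ∑ k ∈ Finset.range (n + 1),
        (Λ k - if k = 0 then 0 else Λ (k - 1)) * Fhat y k := by
      intro n
      have h := congrFun hxy n
      rw [Fbar_eq, Fbar_eq] at h
      exact mul_left_cancel₀ (one_div_ne_zero (hpos n).ne') h
    have hF : ∀ n, Fhat x n = Fhat y n := by
      intro n
      have ha := (a_pos Λ hmono hpos n).ne'
      cases n with
      | zero =>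
          have h0 := hsum 0
          simp only [Finset.sum_range_succ, Finset.sum_range_zero, zero_add] at h0
          exact mul_left_cancel₀ ha h0
      | succ m =>
          have h1 := hsum (m + 1)
          have h2 := hsum m
          simp only [Finset.sum_range_succ] at h1 h2
          rw [h2] at h1
          exact mul_left_cancel₀ ha (add_left_cancel h1)
    exact Fhat_eq_of x y hF
  · intro y hy
    set g : ℕ → ℝ := fun k =>
      (Λ k * y k - if k = 0 then 0 else Λ (k - 1) * y (k - 1)) /
        (Λ k - if k = 0 then 0 else Λ (k - 1)) with hg
    have hFb : Fbar Λ (solveX g) = y := by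
      funext n
      rw [Fbar_eq]
      have hterm : ∀ k, (Λ k - if k = 0 then 0 else Λ (k - 1)) * Fhat (solveX g) k
          = Λ k * y k - if k = 0 then 0 else Λ (k - 1) * y (k - 1) := by
        intro k
        rw [Fhat_solveX, hg]
        exact mul_div_cancel₀ _ (a_pos Λ hmono hpos k).ne'
      rw [Finset.sum_congr rfl fun k _ => hterm k]
      rw [tele (fun k => Λ k * y k) n]
      rw [one_div, inv_mul_cancel_left₀ (hpos n).ne']
    exact ⟨solveX g, by rw [hFb]; exact hy, hFb⟩
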